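/- Let m ≥ 1 be an integer, let 0 < i ≤ j be real numbers, let k ∈ SO(3m), and for s > 0 let Δ_s ∈ SL(3m,ℝ) denote the diagonal matrix whose first m diagonal entries equal e^{2s} and whose remaining 2m diagonal entries equal e^{−s}. Set g = Δ_i · k · Δ_j · k⁻¹ ∈ SL(3m,ℝ). Then: (a) ‖g⁻¹‖ ≤ e^{i+j}, where ‖·‖ is the operator norm with respect to the Euclidean norm on ℝ^{3m}; (b) the subspace W = E ∩ k·E, where E = span{e_{m+1},…,e_{3m}} is spanned by the last 2m standard basis vectors, has dimension at least m, and g x = e^{−(i+j)} x for every x ∈ W; (c) ‖g x‖ ≥ e^{2j−i}·‖x‖ for every x in the image k·span{e₁,…,e_m} of the span of the first m standard basis vectors, and in particular ‖g x‖ > ‖x‖ for every nonzero such x. -/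

import Mathlib

open Matrix

noncomputable section

abbrev Mat (n : ℕ) := Matrix (Fin n) (Fin n) ℝ

/-- Operator norm of a matrix, acting on Euclidean space. -/
def opNorm {n : ℕ} (A : Mat n) : ℝ :=
  ‖LinearMap.toContinuousLinearMap (Matrix.toEuclideanLin A)‖

/-- The diagonal matrix `Δ_s`: first `m` entries `e^{2s}`, last `2m` entries `e^{−s}`. -/
def Delta (m : ℕ) (s : ℝ) : Mat (3 * m) :=
  Matrix.diagonal fun l => if (l : ℕ) < m then Real.exp (2 * s) else Real.exp (-s)

/-- The span `E` of the last `2m` standard basis vectors of `ℝ^{3m}`. -/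
def lastCoords (m : ℕ) : Submodule ℝ (EuclideanSpace ℝ (Fin (3 * m))) where
  carrier := {x | ∀ l : Fin (3 * m), (l : ℕ) < m → x l = 0}
  add_mem' := by
    intro x y hx hy l hl
    show x l + y l = 0
    rw [hx l hl, hy l hl, add_zero]
  zero_mem' := by intro l hl; rfl
  smul_mem' := by
    intro c x hx l hl
    show c * x l = 0
    rw [hx l hl, mul_zero]

/-- The span of the first `m` standard basis vectors of `ℝ^{3m}`. -/
def firstCoords (m : ℕ) : Submodule ℝ (EuclideanSpace ℝ (Fin (3 * m))) where
  carrier := {x | ∀ l : Fin (3 * m), m ≤ (l : ℕ) → x l = 0}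
  add_mem' := by
    intro x y hx hy l hl
    show x l + y l = 0
    rw [hx l hl, hy l hl, add_zero]
  zero_mem' := by intro l hl; rfl
  smul_mem' := by
    intro c x hx l hl
    show c * x l = 0
    rw [hx l hl, mul_zero]



lemma tEL_apply {n : ℕ} (A : Matrix (Fin n) (Fin n) ℝ) (x : EuclideanSpace ℝ (Fin n)) (l : Fin n) :
    Matrix.toEuclideanLin A x l = A.mulVec x l := rfl

lemma tEL_mul {n : ℕ} (A B : Matrix (Fin n) (Fin n) ℝ) (x : EuclideanSpace ℝ (Fin n)) :
    Matrix.toEuclideanLin (A * B) x = Matrix.toEuclideanLin A (Matrix.toEuclideanLin B x) := by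
  ext l
  simp [tEL_apply, ← Matrix.mulVec_mulVec]

lemma tEL_one {n : ℕ} (x : EuclideanSpace ℝ (Fin n)) :
    Matrix.toEuclideanLin (1 : Matrix (Fin n) (Fin n) ℝ) x = x := by
  ext l; simp [tEL_apply]

lemma orth_norm {n : ℕ} (k : Matrix (Fin n) (Fin n) ℝ) (hk : kᵀ * k = 1)
    (x : EuclideanSpace ℝ (Fin n)) : ‖Matrix.toEuclideanLin k x‖ = ‖x‖ := by
  have h1 : @inner ℝ _ _ (Matrix.toEuclideanLin k x) (Matrix.toEuclideanLin k x) = @inner ℝ _ _ x x := by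
    rw [← LinearMap.adjoint_inner_left, ← Matrix.toEuclideanLin_conjTranspose_eq_adjoint,
      ← tEL_mul]
    have : kᴴ = kᵀ := rfl
    rw [this, hk, tEL_one]
  have := congrArg Real.sqrt h1
  rwa [real_inner_self_eq_norm_sq, real_inner_self_eq_norm_sq,
    Real.sqrt_sq (norm_nonneg _), Real.sqrt_sq (norm_nonneg _)] at this

lemma diagE_apply {n : ℕ} (d : Fin n → ℝ) (x : EuclideanSpace ℝ (Fin n)) (l : Fin n) :
    Matrix.toEuclideanLin (Matrix.diagonal d) x l = d l * x l := by
  rw [tEL_apply, Matrix.mulVec_diagonal]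

lemma diag_norm_le {n : ℕ} (d : Fin n → ℝ) (C : ℝ) (hC : 0 ≤ C) (h : ∀ l, |d l| ≤ C)
    (x : EuclideanSpace ℝ (Fin n)) :
    ‖Matrix.toEuclideanLin (Matrix.diagonal d) x‖ ≤ C * ‖x‖ := by
  rw [EuclideanSpace.norm_eq, EuclideanSpace.norm_eq, ← Real.sqrt_sq hC, ← Real.sqrt_mul (sq_nonneg C)]
  apply Real.sqrt_le_sqrt
  rw [Finset.mul_sum]
  apply Finset.sum_le_sum
  intro l _
  rw [diagE_apply]
  have : ‖d l * x l‖ ^ 2 = (d l)^2 * ‖x l‖^2 := by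
    rw [norm_mul, mul_pow]; congr 1; rw [Real.norm_eq_abs, sq_abs]
  rw [this]
  have h2 : (d l)^2 ≤ C^2 := by
    rw [← sq_abs]; exact pow_le_pow_left₀ (abs_nonneg _) (h l) 2
  exact mul_le_mul_of_nonneg_right h2 (sq_nonneg _)

lemma diag_norm_ge {n : ℕ} (d : Fin n → ℝ) (c : ℝ) (hc : 0 ≤ c) (h : ∀ l, c ≤ |d l|)
    (x : EuclideanSpace ℝ (Fin n)) :
    c * ‖x‖ ≤ ‖Matrix.toEuclideanLin (Matrix.diagonal d) x‖ := by
  rw [EuclideanSpace.norm_eq, EuclideanSpace.norm_eq, ← Real.sqrt_sq hc, ← Real.sqrt_mul (sq_nonneg c)]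
  apply Real.sqrt_le_sqrt
  rw [Finset.mul_sum]
  apply Finset.sum_le_sum
  intro l _
  rw [diagE_apply]
  have : ‖d l * x l‖ ^ 2 = (d l)^2 * ‖x l‖^2 := by
    rw [norm_mul, mul_pow]; congr 1; rw [Real.norm_eq_abs, sq_abs]
  rw [this]
  have h2 : c^2 ≤ (d l)^2 := by
    rw [← sq_abs (d l)]; exact pow_le_pow_left₀ hc (h l) 2
  exact mul_le_mul_of_nonneg_right h2 (sq_nonneg _)

/-- projection to the first m coordinates -/
def projFirst (m : ℕ) : EuclideanSpace ℝ (Fin (3 * m)) →ₗ[ℝ] (Fin m → ℝ) where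
  toFun x := fun l => x (Fin.castLE (by omega) l)
  map_add' x y := rfl
  map_smul' c x := rfl

lemma ker_projFirst (m : ℕ) : LinearMap.ker (projFirst m) = lastCoords m := by
  ext x
  constructor
  · intro hx l hl
    have := congrFun (LinearMap.mem_ker.mp hx) ⟨(l : ℕ), hl⟩
    simpa [projFirst, Fin.castLE, Fin.ext_iff] using this
  · intro hx
    rw [LinearMap.mem_ker]
    funext l
    exact hx _ (by simp [Fin.castLE])

lemma surj_projFirst (m : ℕ) : LinearMap.range (projFirst m) = ⊤ := by
  rw [LinearMap.range_eq_top]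
  intro y
  refine ⟨WithLp.toLp 2 (fun l : Fin (3 * m) => if h : (l : ℕ) < m then y ⟨l, h⟩ else 0 :
      Fin (3 * m) → ℝ), ?_⟩
  funext l
  simp [projFirst, Fin.castLE, l.isLt]

lemma finrank_lastCoords (m : ℕ) : Module.finrank ℝ (lastCoords m) = 2 * m := by
  have h := LinearMap.finrank_range_add_finrank_ker (projFirst m)
  rw [ker_projFirst, surj_projFirst, finrank_top] at h
  simp [finrank_euclideanSpace] at h
  omega


lemma smulE_apply {n : ℕ} (c : ℝ) (x : EuclideanSpace ℝ (Fin n)) (l : Fin n) :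
    (c • x) l = c * x l := rfl

lemma Delta_last (m : ℕ) (s : ℝ) {y : EuclideanSpace ℝ (Fin (3 * m))}
    (hy : y ∈ lastCoords m) :
    Matrix.toEuclideanLin (Delta m s) y = Real.exp (-s) • y := by
  ext l
  rw [Delta, diagE_apply, smulE_apply]
  by_cases hl : (l : ℕ) < m
  · rw [hy l hl, mul_zero, mul_zero]
  · rw [if_neg hl]

lemma Delta_first (m : ℕ) (s : ℝ) {y : EuclideanSpace ℝ (Fin (3 * m))}
    (hy : y ∈ firstCoords m) :
    Matrix.toEuclideanLin (Delta m s) y = Real.exp (2 * s) • y := by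
  ext l
  rw [Delta, diagE_apply, smulE_apply]
  by_cases hl : (l : ℕ) < m
  · rw [if_pos hl]
  · rw [hy l (le_of_not_gt hl), mul_zero, mul_zero]

lemma Delta_inv (m : ℕ) (s : ℝ) :
    (Delta m s)⁻¹ =
      Matrix.diagonal (fun l : Fin (3 * m) => if (l : ℕ) < m then Real.exp (-(2 * s)) else Real.exp s) := by
  apply Matrix.inv_eq_right_inv
  rw [Delta, Matrix.diagonal_mul_diagonal, ← Matrix.diagonal_one]
  refine congrArg Matrix.diagonal (funext fun l => ?_)
  show (if (l:ℕ) < m then _ else _) * (if (l:ℕ) < m then _ else _) = (1:ℝ)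
  by_cases hl : (l : ℕ) < m
  · rw [if_pos hl, if_pos hl, ← Real.exp_add, add_neg_cancel, Real.exp_zero]
  · rw [if_neg hl, if_neg hl, ← Real.exp_add, neg_add_cancel, Real.exp_zero]

lemma Delta_inv_norm_le (m : ℕ) {s : ℝ} (hs : 0 < s) (x : EuclideanSpace ℝ (Fin (3 * m))) :
    ‖Matrix.toEuclideanLin (Delta m s)⁻¹ x‖ ≤ Real.exp s * ‖x‖ := by
  rw [Delta_inv]
  apply diag_norm_le _ _ (Real.exp_nonneg s)
  intro l
  by_cases hl : (l : ℕ) < m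
  · rw [if_pos hl, abs_of_pos (Real.exp_pos _)]
    exact Real.exp_le_exp.mpr (by linarith)
  · rw [if_neg hl, abs_of_pos (Real.exp_pos _)]


/-- Claim used in Step 2 of Proposition 4.2: spectral properties of
`g = Δ_i·k·Δ_j·k⁻¹` for `k ∈ SO(3m)` and `0 < i ≤ j`. -/
theorem stmt7 (m : ℕ) (hm : 1 ≤ m) (i j : ℝ) (hi : 0 < i) (hij : i ≤ j)
    (k : Mat (3 * m)) (hkorth : kᵀ * k = 1) (hkdet : k.det = 1) :
    opNorm ((Delta m i * k * Delta m j * k⁻¹)⁻¹) ≤ Real.exp (i + j) ∧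
    (m ≤ Module.finrank ℝ
        ↥(lastCoords m ⊓ (lastCoords m).map (Matrix.toEuclideanLin k)) ∧
      ∀ x ∈ lastCoords m ⊓ (lastCoords m).map (Matrix.toEuclideanLin k),
        Matrix.toEuclideanLin (Delta m i * k * Delta m j * k⁻¹) x =
          Real.exp (-(i + j)) • x) ∧
    (∀ x ∈ (firstCoords m).map (Matrix.toEuclideanLin k),
      Real.exp (2 * j - i) * ‖x‖ ≤
        ‖Matrix.toEuclideanLin (Delta m i * k * Delta m j * k⁻¹) x‖ ∧
      (x ≠ 0 → ‖x‖ < ‖Matrix.toEuclideanLin (Delta m i * k * Delta m j * k⁻¹) x‖)) := by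
  have hj : 0 < j := lt_of_lt_of_le hi hij
  have hdet : k.det ≠ 0 := by rw [hkdet]; exact one_ne_zero
  have hk1 : k * k⁻¹ = 1 := Matrix.mul_nonsing_inv k (hkdet ▸ isUnit_one)
  have h1k : k⁻¹ * k = 1 := Matrix.nonsing_inv_mul k (hkdet ▸ isUnit_one)
  have hkinv_eq : k⁻¹ = kᵀ := Matrix.inv_eq_left_inv hkorth
  have hkinvT : (k⁻¹)ᵀ * k⁻¹ = 1 := by
    rw [hkinv_eq, Matrix.transpose_transpose, mul_eq_one_comm.mp hkorth]
  -- expansion of g applied to x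
  have hg_apply : ∀ x : EuclideanSpace ℝ (Fin (3 * m)),
      Matrix.toEuclideanLin (Delta m i * k * Delta m j * k⁻¹) x =
        Matrix.toEuclideanLin (Delta m i)
          (Matrix.toEuclideanLin k
            (Matrix.toEuclideanLin (Delta m j) (Matrix.toEuclideanLin k⁻¹ x))) := by
    intro x
    rw [tEL_mul, tEL_mul, tEL_mul]
  refine ⟨?_, ⟨?_, ?_⟩, ?_⟩
  · -- part (a)
    have hginv : (Delta m i * k * Delta m j * k⁻¹)⁻¹ =
        k * ((Delta m j)⁻¹ * (k⁻¹ * (Delta m i)⁻¹)) := by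
      rw [Matrix.mul_inv_rev, Matrix.mul_inv_rev, Matrix.mul_inv_rev,
        Matrix.nonsing_inv_nonsing_inv k (hkdet ▸ isUnit_one)]
    rw [opNorm]
    apply ContinuousLinearMap.opNorm_le_bound _ (Real.exp_nonneg _)
    intro x
    rw [LinearMap.coe_toContinuousLinearMap']
    rw [hginv, tEL_mul, tEL_mul, tEL_mul, orth_norm k hkorth]
    calc ‖Matrix.toEuclideanLin (Delta m j)⁻¹
            (Matrix.toEuclideanLin k⁻¹ (Matrix.toEuclideanLin (Delta m i)⁻¹ x))‖
        ≤ Real.exp j * ‖Matrix.toEuclideanLin k⁻¹ (Matrix.toEuclideanLin (Delta m i)⁻¹ x)‖ :=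
          Delta_inv_norm_le m hj _
      _ = Real.exp j * ‖Matrix.toEuclideanLin (Delta m i)⁻¹ x‖ := by
          rw [orth_norm k⁻¹ hkinvT]
      _ ≤ Real.exp j * (Real.exp i * ‖x‖) := by
          exact mul_le_mul_of_nonneg_left (Delta_inv_norm_le m hi x) (Real.exp_nonneg _)
      _ = Real.exp (i + j) * ‖x‖ := by rw [← mul_assoc, ← Real.exp_add, add_comm j i]
  · -- dimension bound
    set e : EuclideanSpace ℝ (Fin (3 * m)) ≃ₗ[ℝ] EuclideanSpace ℝ (Fin (3 * m)) :=
      LinearEquiv.ofLinear (Matrix.toEuclideanLin k) (Matrix.toEuclideanLin k⁻¹)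
        (LinearMap.ext fun x => by
          rw [LinearMap.comp_apply, ← tEL_mul, hk1, tEL_one, LinearMap.id_apply])
        (LinearMap.ext fun x => by
          rw [LinearMap.comp_apply, ← tEL_mul, h1k, tEL_one, LinearMap.id_apply]) with he
    have hmapeq : (lastCoords m).map (Matrix.toEuclideanLin k) =
        (lastCoords m).map (e : EuclideanSpace ℝ (Fin (3 * m)) →ₗ[ℝ] _) := rfl
    have hrk : Module.finrank ℝ ((lastCoords m).map (Matrix.toEuclideanLin k)) = 2 * m := by
      rw [hmapeq, LinearEquiv.finrank_map_eq, finrank_lastCoords]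
    have hsum := Submodule.finrank_sup_add_finrank_inf_eq (lastCoords m)
      ((lastCoords m).map (Matrix.toEuclideanLin k))
    have hle : Module.finrank ℝ
        ↥(lastCoords m ⊔ (lastCoords m).map (Matrix.toEuclideanLin k)) ≤ 3 * m := by
      have := Submodule.finrank_le
        (lastCoords m ⊔ (lastCoords m).map (Matrix.toEuclideanLin k))
      rwa [finrank_euclideanSpace, Fintype.card_fin] at this
    rw [finrank_lastCoords, hrk] at hsum
    omega
  · -- eigenvalue on the intersection
    intro x hx
    obtain ⟨hx1, hx2⟩ := Submodule.mem_inf.mp hx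
    obtain ⟨y, hy, hxy⟩ := Submodule.mem_map.mp hx2
    have h1 : Matrix.toEuclideanLin k⁻¹ x = y := by
      rw [← hxy, ← tEL_mul, h1k, tEL_one]
    rw [hg_apply, h1, Delta_last m j hy, _root_.map_smul, hxy, _root_.map_smul, Delta_last m i hx1,
      smul_smul, ← Real.exp_add]
    congr 1
    ring_nf
  · -- expansion on k · firstCoords
    intro x hx
    obtain ⟨y, hy, hxy⟩ := Submodule.mem_map.mp hx
    have h1 : Matrix.toEuclideanLin k⁻¹ x = y := by
      rw [← hxy, ← tEL_mul, h1k, tEL_one]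
    have hgx : Matrix.toEuclideanLin (Delta m i * k * Delta m j * k⁻¹) x =
        Real.exp (2 * j) • Matrix.toEuclideanLin (Delta m i) x := by
      rw [hg_apply, h1, Delta_first m j hy, _root_.map_smul, hxy, _root_.map_smul]
    have hlow : Real.exp (-i) * ‖x‖ ≤ ‖Matrix.toEuclideanLin (Delta m i) x‖ := by
      rw [Delta]
      apply diag_norm_ge _ _ (Real.exp_nonneg _)
      intro l
      by_cases hl : (l : ℕ) < m
      · rw [if_pos hl, abs_of_pos (Real.exp_pos _)]
        exact Real.exp_le_exp.mpr (by linarith)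
      · rw [if_neg hl, abs_of_pos (Real.exp_pos _)]
    have hmain : Real.exp (2 * j - i) * ‖x‖ ≤
        ‖Matrix.toEuclideanLin (Delta m i * k * Delta m j * k⁻¹) x‖ := by
      rw [hgx, norm_smul, Real.norm_eq_abs, Real.abs_exp]
      calc Real.exp (2 * j - i) * ‖x‖ = Real.exp (2 * j) * (Real.exp (-i) * ‖x‖) := by
            rw [← mul_assoc, ← Real.exp_add]; ring_nf
        _ ≤ Real.exp (2 * j) * ‖Matrix.toEuclideanLin (Delta m i) x‖ :=
            mul_le_mul_of_nonneg_left hlow (Real.exp_nonneg _)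
    refine ⟨hmain, fun hne => ?_⟩
    have hxpos : 0 < ‖x‖ := norm_pos_iff.mpr hne
    have h1lt : 1 < Real.exp (2 * j - i) := by
      have := Real.exp_lt_exp.mpr (show (0:ℝ) < 2 * j - i by linarith)
      rwa [Real.exp_zero] at this
    calc ‖x‖ = 1 * ‖x‖ := (one_mul _).symm
      _ < Real.exp (2 * j - i) * ‖x‖ := by
          exact mul_lt_mul_of_pos_right h1lt hxpos
      _ ≤ _ := hmain
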